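/- Let C ⊆ powerset([n]) be a code with a unique maximal codeword (under inclusion). Then C is convex with minimal embedding dimension at most 2: there exist convex open sets U₁,…,Uₙ ⊆ ℝ² such that C = C(U) ∪ {∅}, where C(U) = {σ ⊆ [n] : (⋂_{i∈σ}U_i) ∖ ⋃_{j∉σ}U_j ≠ ∅} with ⋂ over ∅ interpreted as ℝ². -/

import Mathlib

/-- The code of a collection of sets `U₁, …, Uₙ` in a space `X`:
`σ ∈ C(U)` iff `U_σ ∖ ⋃_{j ∉ σ} U_j ≠ ∅`, where `U_σ = ⋂_{i ∈ σ} U_i`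
(with `U_∅` the whole space). -/
def codeOf {n : ℕ} {X : Type*} (U : Fin n → Set X) : Set (Finset (Fin n)) :=
  {σ | ((⋂ i ∈ σ, U i) \ ⋃ j ∈ (σᶜ : Finset (Fin n)), U j).Nonempty}

theorem stmt10 {n : ℕ} (C : Set (Finset (Fin n))) (hempty : ∅ ∈ C)
    (huniq : ∃! m, m ∈ C ∧ ∀ c ∈ C, m ⊆ c → c = m) :
    ∃ U : Fin n → Set (Fin 2 → ℝ),
      (∀ i, IsOpen (U i)) ∧ (∀ i, Convex ℝ (U i)) ∧ C = codeOf U ∪ {∅} := by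
  classical
  obtain ⟨m, ⟨hmC, hmmax⟩, hmuniq⟩ := huniq
  -- every codeword is contained in m
  have hsub : ∀ c ∈ C, c ⊆ m := by
    intro c hc
    obtain ⟨d, hd, hdmax⟩ := Set.Finite.exists_maximalFor Finset.card
      {d | d ∈ C ∧ c ⊆ d} (Set.toFinite _) ⟨c, hc, subset_rfl⟩
    have hdm : d = m := by
      apply hmuniq
      refine ⟨hd.1, fun e he hde => ?_⟩
      have hcard := hdmax ⟨he, hd.2.trans hde⟩ (Finset.card_le_card hde)
      exact (Finset.eq_of_subset_of_card_le hde hcard.ge).symm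
    exact hdm ▸ hd.2
  set T : Finset (Fin n) → ℝ := fun σ => (((Fintype.equivFin (Finset (Fin n))) σ : ℕ) : ℝ) with hT
  have hsep : ∀ σ τ : Finset (Fin n), σ ≠ τ → 1 ≤ |T σ - T τ| := by
    intro σ τ hne
    have h1 : ((Fintype.equivFin (Finset (Fin n))) σ : ℕ) ≠
        ((Fintype.equivFin (Finset (Fin n))) τ : ℕ) := by
      intro h
      exact hne ((Fintype.equivFin (Finset (Fin n))).injective (Fin.ext h))
    set a := ((Fintype.equivFin (Finset (Fin n))) σ : ℕ)
    set b := ((Fintype.equivFin (Finset (Fin n))) τ : ℕ)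
    rw [hT]
    rcases Nat.lt_or_ge a b with hl | hg
    · have : (a : ℝ) + 1 ≤ (b : ℝ) := by exact_mod_cast hl
      refine le_abs.mpr (Or.inr (by linarith))
    · have hl : b < a := lt_of_le_of_ne hg (fun h => h1 h.symm)
      have : (b : ℝ) + 1 ≤ (a : ℝ) := by exact_mod_cast hl
      refine le_abs.mpr (Or.inl (by linarith))
  have hsepsq : ∀ σ τ : Finset (Fin n), σ ≠ τ → 1 ≤ (T σ - T τ)^2 := by
    intro σ τ hne
    have h := hsep σ τ hne
    nlinarith [sq_abs (T σ - T τ), abs_nonneg (T σ - T τ)]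
  set U : Fin n → Set (Fin 2 → ℝ) := fun i =>
    {p | i ∈ m ∧ p 1 + (p 0)^2 < 1/4 ∧
      ∀ σ ∈ C, i ∉ σ → p 1 + 2 * T σ * p 0 - (T σ)^2 < 0} with hUdef
  have hUmem : ∀ (i : Fin n) (p : Fin 2 → ℝ), p ∈ U i ↔ (i ∈ m ∧ p 1 + (p 0)^2 < 1/4 ∧
      ∀ σ ∈ C, i ∉ σ → p 1 + 2 * T σ * p 0 - (T σ)^2 < 0) := fun i p => Iff.rfl
  have hopen : ∀ i, IsOpen (U i) := by
    intro i
    by_cases him : i ∈ m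
    · have heq : U i = {p : Fin 2 → ℝ | p 1 + (p 0)^2 < 1/4} ∩
          ⋂ σ ∈ {σ : Finset (Fin n) | σ ∈ C ∧ i ∉ σ},
            {p : Fin 2 → ℝ | p 1 + 2 * T σ * p 0 - (T σ)^2 < 0} := by
        ext p
        simp only [hUmem, Set.mem_inter_iff, Set.mem_setOf_eq, Set.mem_iInter, him, true_and]
        constructor
        · rintro ⟨h1, h2⟩
          exact ⟨h1, fun σ hσ => h2 σ hσ.1 hσ.2⟩
        · rintro ⟨h1, h2⟩
          exact ⟨h1, fun σ h hi => h2 σ ⟨h, hi⟩⟩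
      rw [heq]
      refine (isOpen_lt (by fun_prop) continuous_const).inter ?_
      refine Set.Finite.isOpen_biInter (Set.toFinite _) fun σ _ => ?_
      exact isOpen_lt (by fun_prop) continuous_const
    · have heq : U i = ∅ := by
        ext p
        simp only [hUmem, Set.mem_empty_iff_false, iff_false]
        intro h
        exact him h.1
      rw [heq]; exact isOpen_empty
  have hconv : ∀ i, Convex ℝ (U i) := by
    intro i p hp q hq a b ha hb hab
    obtain ⟨him, hcap, hcon⟩ := hp
    obtain ⟨_, hcap', hcon'⟩ := hq
    have e0 : (a • p + b • q) 0 = a * p 0 + b * q 0 := by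
      simp [Pi.add_apply, Pi.smul_apply, smul_eq_mul]
    have e1 : (a • p + b • q) 1 = a * p 1 + b * q 1 := by
      simp [Pi.add_apply, Pi.smul_apply, smul_eq_mul]
    have hpos : 0 < a ∨ 0 < b := by
      by_contra h
      push_neg at h
      have := h.1
      have := h.2
      linarith
    refine (hUmem i _).mpr ⟨him, ?_, ?_⟩
    · rw [e0, e1]
      rcases hpos with ha' | hb'
      · nlinarith [mul_nonneg (mul_nonneg ha hb) (sq_nonneg (p 0 - q 0)),
          mul_lt_mul_of_pos_left hcap ha', mul_le_mul_of_nonneg_left hcap'.le hb]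
      · nlinarith [mul_nonneg (mul_nonneg ha hb) (sq_nonneg (p 0 - q 0)),
          mul_le_mul_of_nonneg_left hcap.le ha, mul_lt_mul_of_pos_left hcap' hb']
    · intro σ hσ hiσ
      have h1 := hcon σ hσ hiσ
      have h2 := hcon' σ hσ hiσ
      rw [e0, e1]
      rcases hpos with ha' | hb'
      · nlinarith [mul_lt_mul_of_pos_left h1 ha', mul_le_mul_of_nonneg_left h2.le hb]
      · nlinarith [mul_le_mul_of_nonneg_left h1.le ha, mul_lt_mul_of_pos_left h2 hb']
  refine ⟨U, hopen, hconv, ?_⟩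
  have hforward : ∀ c ∈ C, c ∈ codeOf U := by
    intro c hc
    refine ⟨![T c, 1/8 - (T c)^2], ?_, ?_⟩
    · refine Set.mem_iInter₂.mpr fun i hi => (hUmem i _).mpr ⟨hsub c hc hi, ?_, ?_⟩
      · simp only [Matrix.cons_val_one, Matrix.head_cons, Matrix.cons_val_zero]
        nlinarith
      · intro σ hσ hiσ
        have hne : σ ≠ c := fun h => hiσ (h ▸ hi)
        have hs := hsepsq σ c hne
        simp only [Matrix.cons_val_one, Matrix.head_cons, Matrix.cons_val_zero]
        nlinarith
    · simp only [Set.mem_iUnion, not_exists]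
      intro j hj hmem
      have hj' : j ∉ c := Finset.mem_compl.mp hj
      obtain ⟨hjm, _, hcon⟩ := (hUmem j _).mp hmem
      have := hcon c hc hj'
      simp only [Matrix.cons_val_one, Matrix.head_cons, Matrix.cons_val_zero] at this
      nlinarith
  have hbackward : ∀ σ ∈ codeOf U, σ ∈ C := by
    intro σ hσ
    obtain ⟨p, hpin, hpout⟩ := hσ
    have hmem : ∀ i ∈ σ, p ∈ U i := fun i hi => Set.mem_iInter₂.mp hpin i hi
    have hnot : ∀ j, j ∉ σ → p ∉ U j := by
      intro j hj hmemj
      exact hpout (Set.mem_biUnion (Finset.mem_compl.mpr hj) hmemj)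
    rcases Finset.eq_empty_or_nonempty σ with hσe | ⟨i₀, hi₀⟩
    · rw [hσe]; exact hempty
    obtain ⟨hi₀m, hcap, _⟩ := (hUmem i₀ p).mp (hmem i₀ hi₀)
    by_cases hviol : ∃ τ ∈ C, 0 ≤ p 1 + 2 * T τ * p 0 - (T τ)^2
    · obtain ⟨τ, hτC, hτv⟩ := hviol
      have hστ : σ = τ := by
        ext i
        constructor
        · intro hiσ
          obtain ⟨him, _, hcon⟩ := (hUmem i p).mp (hmem i hiσ)
          by_contra hiτ
          exact absurd (hcon τ hτC hiτ) (not_lt.mpr hτv)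
        · intro hiτ
          by_contra hiσ
          apply hnot i hiσ
          refine (hUmem i p).mpr ⟨hsub τ hτC hiτ, hcap, ?_⟩
          intro σ' hσ' hiσ'
          have hne : σ' ≠ τ := fun h => hiσ' (h ▸ hiτ)
          by_contra hge
          push_neg at hge
          have hs := hsepsq σ' τ hne
          nlinarith [sq_nonneg (2 * p 0 - T τ - T σ'), hτv, hge, hcap]
      rw [hστ]; exact hτC
    · push_neg at hviol
      have hσm : σ = m := by
        ext i
        constructor
        · intro hiσ
          exact ((hUmem i p).mp (hmem i hiσ)).1
        · intro him
          by_contra hiσ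
          exact hnot i hiσ ((hUmem i p).mpr ⟨him, hcap, fun σ' hσ' _ => hviol σ' hσ'⟩)
      rw [hσm]; exact hmC
  ext σ
  constructor
  · intro hσ
    exact Or.inl (hforward σ hσ)
  · rintro (hσ | hσ)
    · exact hbackward σ hσ
    · rw [Set.mem_singleton_iff.mp hσ]; exact hempty
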